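/- arXiv:2206.05263 — 6 statements merged into one kernel-verified Lean document; each statement's English description precedes it below -/
import Mathlib

section
/- Let X, Y, Z be random variables on a probability space, where Y takes values in the finite set {1,...,m}, Z takes values in a measurable space 𝒵, and let b : 𝒵 → ℬ be a measurable function into a measurable space ℬ. Define the propensity score s(Z) = (P(Y = y | Z))_{y=1}^m, a σ(Z)-measurable ℝ^m-valued random variable. If there exists a measurable function g : ℬ → ℝ^m such that s(Z) = g(b(Z)) almost surely (i.e. b(Z) is finer than s(Z)), then Y and Z are conditionally independent given the σ-algebra generated by b(Z); that is, b(Z) is a balancing score. -/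
open MeasureTheory ProbabilityTheory

/-- **Rosenbaum–Rubin, sufficiency direction.**
If the propensity score `s ω = (P(Y = y | σ(Z)))_{y=1,…,m}` is almost surely a measurable
function of `b ∘ Z` (i.e. `b(Z)` is finer than `s(Z)`), then `Y` and `Z` are conditionally
independent given the σ-algebra generated by `b ∘ Z`; that is, `b(Z)` is a balancing score. -/
theorem balancing_score_of_finer_than_propensity
    {Ω 𝒵 ℬ : Type*} [mΩ : MeasurableSpace Ω] [StandardBorelSpace Ω] [Nonempty Ω]
    {m𝒵 : MeasurableSpace 𝒵} {mℬ : MeasurableSpace ℬ}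
    (μ : Measure Ω) [IsProbabilityMeasure μ]
    {m : ℕ} (Y : Ω → Fin m) (Z : Ω → 𝒵) (b : 𝒵 → ℬ)
    (hY : Measurable Y) (hZ : Measurable Z) (hb : Measurable b)
    -- the propensity score `s(Z) = (P(Y = y | Z))_{y=1}^m`, a `σ(Z)`-measurable random vector
    (s : Ω → Fin m → ℝ)
    (hs_meas : Measurable[MeasurableSpace.comap Z m𝒵] s)
    (hs : ∀ y : Fin m,
      (fun ω => s ω y) =ᵐ[μ]
        μ[Set.indicator {ω | Y ω = y} (fun _ => (1 : ℝ)) | MeasurableSpace.comap Z m𝒵])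
    -- `b(Z)` is finer than `s(Z)`: `s(Z) = g(b(Z))` almost surely for some measurable `g`
    (hfiner : ∃ g : ℬ → Fin m → ℝ, Measurable g ∧ s =ᵐ[μ] fun ω => g (b (Z ω))) :
    -- conclusion: `Y ⫫ Z | σ(b ∘ Z)`
    CondIndepFun (MeasurableSpace.comap (fun ω => b (Z ω)) mℬ)
      ((hb.comp hZ).comap_le) Y Z μ := by
  classical
  obtain ⟨g, hg, hgs⟩ := hfiner
  set m' := MeasurableSpace.comap (fun ω => b (Z ω)) mℬ with hm'def
  set mZ := MeasurableSpace.comap Z m𝒵 with hmZdef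
  letI : MeasurableSpace Ω := mΩ
  have hm'Z : m' ≤ mZ := by
    rintro _ ⟨t, ht, rfl⟩
    exact ⟨b ⁻¹' t, hb ht, rfl⟩
  have hmZΩ : mZ ≤ mΩ := hZ.comap_le
  have hm'Ω : m' ≤ mΩ := hm'Z.trans hmZΩ
  set s' : Ω → Fin m → ℝ := fun ω => g (b (Z ω)) with hs'def
  have hbZ : Measurable[m'] (fun ω => b (Z ω)) := fun t ht => ⟨t, ht, rfl⟩
  have hs'meas : ∀ y, StronglyMeasurable[m'] (fun ω => s' ω y) := fun y =>
    (((measurable_pi_apply y).comp hg).comp hbZ).stronglyMeasurable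
  have hss' : ∀ y, (fun ω => s ω y) =ᵐ[μ] fun ω => s' ω y :=
    fun y => hgs.mono fun ω h => congrFun h y
  have hs'int : ∀ y, Integrable (fun ω => s' ω y) μ := fun y =>
    ((integrable_condExp.congr (hs y).symm).congr (hss' y))
  have hint : ∀ D : Set Ω, MeasurableSet[mΩ] D →
      Integrable (D.indicator (fun _ => (1:ℝ))) μ :=
    fun D hD => (integrable_const (1:ℝ)).indicator hD
  have hkeyA : ∀ y : Fin m, (μ⟦Y ⁻¹' {y} | m'⟧) =ᵐ[μ] fun ω => s' ω y := by
    intro y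
    calc (μ⟦Y ⁻¹' {y} | m'⟧)
        =ᵐ[μ] μ[μ[(Y ⁻¹' {y}).indicator (fun _ => (1:ℝ)) | mZ] | m'] :=
          (condExp_condExp_of_le hm'Z hmZΩ).symm
      _ =ᵐ[μ] μ[fun ω => s ω y | m'] := condExp_congr_ae (hs y).symm
      _ =ᵐ[μ] μ[fun ω => s' ω y | m'] := condExp_congr_ae (hss' y)
      _ =ᵐ[μ] fun ω => s' ω y := by
          rw [condExp_of_stronglyMeasurable hm'Ω (hs'meas y) (hs'int y)]
  have hkey : ∀ (y : Fin m) (B : Set Ω), MeasurableSet[mZ] B →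
      (μ⟦Y ⁻¹' {y} ∩ B | m'⟧) =ᵐ[μ]
        fun ω => (μ⟦Y ⁻¹' {y} | m'⟧) ω * (μ⟦B | m'⟧) ω := by
    intro y B hBZ
    have hB : MeasurableSet[mΩ] B := hmZΩ _ hBZ
    have hA : MeasurableSet[mΩ] (Y ⁻¹' {y}) := hY (measurableSet_singleton y)
    have hsplit : (Y ⁻¹' {y} ∩ B).indicator (fun _ => (1:ℝ)) =
        B.indicator (fun _ => (1:ℝ)) * (Y ⁻¹' {y}).indicator (fun _ => (1:ℝ)) := by
      rw [Set.inter_comm]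
      exact Set.inter_indicator_one
    have h1 : μ[(Y ⁻¹' {y} ∩ B).indicator (fun _ => (1:ℝ)) | mZ] =ᵐ[μ]
        fun ω => s' ω y * B.indicator (fun _ => (1:ℝ)) ω := by
      rw [hsplit]
      have hBsm : StronglyMeasurable[mZ] (B.indicator (fun _ => (1:ℝ))) :=
        stronglyMeasurable_const.indicator hBZ
      have hprodint : Integrable
          (B.indicator (fun _ => (1:ℝ)) * (Y ⁻¹' {y}).indicator (fun _ => (1:ℝ))) μ := by
        rw [← hsplit]; exact hint _ (hA.inter hB)
      have hpull := condExp_mul_of_stronglyMeasurable_left hBsm hprodint (hint _ hA)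
      refine hpull.trans ?_
      filter_upwards [(hs y).symm.trans (hss' y)] with ω hω
      simp only [Pi.mul_apply]
      have hω' : (μ[(Y ⁻¹' {y}).indicator (fun _ => (1:ℝ)) | mZ]) ω = s' ω y := hω
      rw [hω', mul_comm]
    have hprodint2 : Integrable ((fun ω => s' ω y) * B.indicator (fun _ => (1:ℝ))) μ := by
      have heq : (fun ω => s' ω y) * B.indicator (fun _ => (1:ℝ)) =
          B.indicator (fun ω => s' ω y) := by
        funext ω
        by_cases h : ω ∈ B <;>
          simp [Set.indicator_of_mem, Set.indicator_of_notMem, h]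
      rw [heq]
      exact (hs'int y).indicator hB
    calc (μ⟦Y ⁻¹' {y} ∩ B | m'⟧)
        =ᵐ[μ] μ[μ[(Y ⁻¹' {y} ∩ B).indicator (fun _ => (1:ℝ)) | mZ] | m'] :=
          (condExp_condExp_of_le hm'Z hmZΩ).symm
      _ =ᵐ[μ] μ[(fun ω => s' ω y) * B.indicator (fun _ => (1:ℝ)) | m'] :=
          condExp_congr_ae h1
      _ =ᵐ[μ] (fun ω => s' ω y) * μ[B.indicator (fun _ => (1:ℝ)) | m'] :=
          condExp_mul_of_stronglyMeasurable_left (hs'meas y) hprodint2 (hint _ hB)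
      _ =ᵐ[μ] fun ω => (μ⟦Y ⁻¹' {y} | m'⟧) ω * (μ⟦B | m'⟧) ω := by
          filter_upwards [hkeyA y] with ω hω
          simp only [Pi.mul_apply]
          rw [hω]
  rw [condIndepFun_iff_condExp_inter_preimage_eq_mul hY hZ]
  intro S t hS ht
  set T : Finset (Fin m) := Finset.univ.filter (· ∈ S) with hT
  have hBZ : MeasurableSet[mZ] (Z ⁻¹' t) := ⟨t, ht, rfl⟩
  have hdec : ∀ C : Set Ω, (Y ⁻¹' S ∩ C).indicator (fun _ => (1:ℝ)) =
      ∑ y ∈ T, (Y ⁻¹' {y} ∩ C).indicator (fun _ => (1:ℝ)) := by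
    intro C
    funext ω
    rw [Finset.sum_apply]
    simp only [Set.indicator_apply, Set.mem_inter_iff, Set.mem_preimage,
      Set.mem_singleton_iff]
    by_cases hC : ω ∈ C
    · simp only [hC, and_true]
      by_cases hYS : Y ω ∈ S
      · rw [if_pos hYS, Finset.sum_eq_single (Y ω)]
        · simp
        · intro c hc hne
          exact if_neg (fun h => hne h.symm)
        · intro h
          exact absurd (Finset.mem_filter.mpr ⟨Finset.mem_univ _, hYS⟩) h
      · rw [if_neg hYS, eq_comm]
        refine Finset.sum_eq_zero fun c hc => if_neg fun h => ?_
        exact hYS (h ▸ (Finset.mem_filter.mp hc).2)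
    · simp [hC]
  have hdecexp : ∀ C : Set Ω, MeasurableSet[mΩ] C →
      (μ⟦Y ⁻¹' S ∩ C | m'⟧) =ᵐ[μ] fun ω => ∑ y ∈ T, (μ⟦Y ⁻¹' {y} ∩ C | m'⟧) ω := by
    intro C hC
    have h := condExp_finsetSum (m := m') (μ := μ) (s := T)
      (f := fun y => (Y ⁻¹' {y} ∩ C).indicator (fun _ => (1:ℝ)))
      (fun y _ => hint _ ((hY (measurableSet_singleton y)).inter hC))
    calc (μ⟦Y ⁻¹' S ∩ C | m'⟧)
        = μ[∑ y ∈ T, (Y ⁻¹' {y} ∩ C).indicator (fun _ => (1:ℝ)) | m'] := by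
          rw [← hdec C]
      _ =ᵐ[μ] ∑ y ∈ T, μ[(Y ⁻¹' {y} ∩ C).indicator (fun _ => (1:ℝ)) | m'] := h
      _ = fun ω => ∑ y ∈ T, (μ⟦Y ⁻¹' {y} ∩ C | m'⟧) ω := by
          funext ω; rw [Finset.sum_apply]
  calc (μ⟦Y ⁻¹' S ∩ Z ⁻¹' t | m'⟧)
      =ᵐ[μ] fun ω => ∑ y ∈ T, (μ⟦Y ⁻¹' {y} ∩ Z ⁻¹' t | m'⟧) ω :=
        hdecexp _ (hmZΩ _ hBZ)
    _ =ᵐ[μ] fun ω => ∑ y ∈ T, (μ⟦Y ⁻¹' {y} | m'⟧) ω * (μ⟦Z ⁻¹' t | m'⟧) ω := by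
        filter_upwards [ae_all_iff.mpr fun y => hkey y (Z ⁻¹' t) hBZ] with ω hω
        exact Finset.sum_congr rfl fun y _ => hω y
    _ = fun ω => (∑ y ∈ T, (μ⟦Y ⁻¹' {y} | m'⟧) ω) * (μ⟦Z ⁻¹' t | m'⟧) ω := by
        funext ω; rw [Finset.sum_mul]
    _ =ᵐ[μ] fun ω => (μ⟦Y ⁻¹' S | m'⟧) ω * (μ⟦Z ⁻¹' t | m'⟧) ω := by
        have h2 : (μ⟦Y ⁻¹' S | m'⟧) =ᵐ[μ] fun ω => ∑ y ∈ T, (μ⟦Y ⁻¹' {y} | m'⟧) ω := by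
          have h3 := hdecexp Set.univ MeasurableSet.univ
          simpa [Set.inter_univ] using h3
        filter_upwards [h2] with ω hω
        rw [hω]
end

section
/- Let X, Y, Z be random variables on a probability space, where Y takes values in the finite set {1,...,m}, Z takes values in a measurable space 𝒵, and let b : 𝒵 → ℬ be a measurable function into a measurable space ℬ. Define the propensity score s(Z) = (P(Y = y | Z))_{y=1}^m. If Y and Z are conditionally independent given the σ-algebra generated by b(Z) (i.e. b(Z) is a balancing score), then s(Z) is almost surely equal to a σ(b(Z))-measurable function; that is, there exists a measurable function g : ℬ → ℝ^m with s(Z) = g(b(Z)) almost surely, so b(Z) is finer than s(Z). -/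
open MeasureTheory ProbabilityTheory Filter Topology

/-- Factorization of a simple function measurable w.r.t. a comap σ-algebra. -/
lemma simpleFunc_comap_factor {Ω β : Type*} {mβ : MeasurableSpace β} (φ : Ω → β)
    (f : @MeasureTheory.SimpleFunc Ω (mβ.comap φ) ℝ) :
    ∃ g : β → ℝ, Measurable g ∧ ⇑f = fun ω => g (φ ω) := by
  induction f using MeasureTheory.SimpleFunc.induction with
  | const c hs =>
    rename_i s
    obtain ⟨B, hB, hpre⟩ := id hs
    refine ⟨B.indicator fun _ => c, measurable_const.indicator hB, ?_⟩
    funext ω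
    have hmem : ω ∈ s ↔ φ ω ∈ B := by rw [← hpre]; rfl
    by_cases h : φ ω ∈ B
    · simp [MeasureTheory.SimpleFunc.piecewise_apply, hmem.mpr h, Set.indicator_of_mem h]
    · simp [MeasureTheory.SimpleFunc.piecewise_apply, hmem, h, Set.indicator_of_notMem h]
  | add hdisj h1 h2 =>
    rename_i f₁ f₂
    obtain ⟨g₁, hg₁, he₁⟩ := h1
    obtain ⟨g₂, hg₂, he₂⟩ := h2
    exact ⟨g₁ + g₂, hg₁.add hg₂, by funext ω; simp [he₁, he₂]⟩

/-- Doob–Dynkin factorization for real-valued functions. -/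
lemma doob_dynkin_real {Ω β : Type*} {mβ : MeasurableSpace β} {φ : Ω → β} {f : Ω → ℝ}
    (hf : Measurable[mβ.comap φ] f) :
    ∃ g : β → ℝ, Measurable g ∧ f = fun ω => g (φ ω) := by
  have hsm : StronglyMeasurable[mβ.comap φ] f := hf.stronglyMeasurable
  choose G hGmeas hGeq using fun n => simpleFunc_comap_factor φ (hsm.approx n)
  have htend : ∀ ω, Tendsto (fun n => G n (φ ω)) atTop (𝓝 (f ω)) := by
    intro ω
    have h := hsm.tendsto_approx ω
    have : (fun n => G n (φ ω)) = fun n => hsm.approx n ω := by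
      funext n; rw [hGeq n]
    rw [this]; exact h
  have hSmeas : MeasurableSet {x | ∃ c, Tendsto (fun n => G n x) atTop (𝓝 c)} :=
    measurableSet_exists_tendsto hGmeas
  set S : Set β := {x | ∃ c, Tendsto (fun n => G n x) atTop (𝓝 c)} with hS
  have hHmeas : ∀ n, Measurable (S.indicator (G n)) := fun n => (hGmeas n).indicator hSmeas
  have hHtend : ∀ x, Tendsto (fun n => S.indicator (G n) x) atTop
      (𝓝 (limUnder atTop (fun n => S.indicator (G n) x))) := by
    intro x
    by_cases hx : x ∈ S
    · have heq : (fun n => S.indicator (G n) x) = fun n => G n x := by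
        funext n; exact Set.indicator_of_mem hx _
      rw [heq]
      exact tendsto_nhds_limUnder hx
    · have heq : (fun n => S.indicator (G n) x) = fun _ => (0 : ℝ) := by
        funext n; exact Set.indicator_of_notMem hx _
      rw [heq]
      exact tendsto_nhds_limUnder ⟨0, tendsto_const_nhds⟩
  refine ⟨fun x => limUnder atTop (fun n => S.indicator (G n) x), ?_, ?_⟩
  · apply measurable_of_tendsto_metrizable hHmeas
    rw [tendsto_pi_nhds]
    exact hHtend
  · funext ω
    have hmem : φ ω ∈ S := ⟨f ω, htend ω⟩
    have h1 : Tendsto (fun n => S.indicator (G n) (φ ω)) atTop (𝓝 (f ω)) := by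
      have heq : (fun n => S.indicator (G n) (φ ω)) = fun n => G n (φ ω) := by
        funext n; exact Set.indicator_of_mem hmem _
      rw [heq]; exact htend ω
    exact tendsto_nhds_unique h1 (hHtend (φ ω))

/-- **Rosenbaum–Rubin, necessity direction.**
If `Y` and `Z` are conditionally independent given the σ-algebra generated by `b ∘ Z`
(i.e. `b(Z)` is a balancing score), then the propensity score
`s ω = (P(Y = y | σ(Z)))_{y=1,…,m}` is almost surely a measurable function of `b ∘ Z`;
that is, `b(Z)` is finer than `s(Z)`. -/
theorem finer_than_propensity_of_balancing_score
    {Ω 𝒵 ℬ : Type*} [mΩ : MeasurableSpace Ω] [StandardBorelSpace Ω] [Nonempty Ω]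
    {m𝒵 : MeasurableSpace 𝒵} {mℬ : MeasurableSpace ℬ}
    (μ : Measure Ω) [IsProbabilityMeasure μ]
    {m : ℕ} (Y : Ω → Fin m) (Z : Ω → 𝒵) (b : 𝒵 → ℬ)
    (hY : Measurable Y) (hZ : Measurable Z) (hb : Measurable b)
    -- the propensity score `s(Z) = (P(Y = y | Z))_{y=1}^m`, a `σ(Z)`-measurable random vector
    (s : Ω → Fin m → ℝ)
    (hs_meas : Measurable[MeasurableSpace.comap Z m𝒵] s)
    (hs : ∀ y : Fin m,
      (fun ω => s ω y) =ᵐ[μ]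
        μ[Set.indicator {ω | Y ω = y} (fun _ => (1 : ℝ)) | MeasurableSpace.comap Z m𝒵])
    -- `b(Z)` is a balancing score: `Y ⫫ Z | σ(b ∘ Z)`
    (hbal : CondIndepFun (MeasurableSpace.comap (fun ω => b (Z ω)) mℬ)
      ((hb.comp hZ).comap_le) Y Z μ) :
    -- conclusion: `b(Z)` is finer than `s(Z)`
    ∃ g : ℬ → Fin m → ℝ, Measurable g ∧ s =ᵐ[μ] fun ω => g (b (Z ω)) := by
  have hmZ : MeasurableSpace.comap Z m𝒵 ≤ mΩ := hZ.comap_le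
  have hmB : MeasurableSpace.comap (fun ω => b (Z ω)) mℬ ≤ mΩ := (hb.comp hZ).comap_le
  have hBZ : MeasurableSpace.comap (fun ω => b (Z ω)) mℬ ≤ MeasurableSpace.comap Z m𝒵 := by
    rw [show (fun ω => b (Z ω)) = b ∘ Z from rfl, ← MeasurableSpace.comap_comp]
    exact MeasurableSpace.comap_mono hb.comap_le
  have hSA : ∀ y : Fin m, {ω | Y ω = y} = Y ⁻¹' {y} := by
    intro y; ext ω; simp
  have hYset : ∀ y : Fin m, MeasurableSet[mΩ] (Y ⁻¹' {y}) := fun y =>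
    hY (measurableSet_singleton y)
  have hfint : ∀ y : Fin m, Integrable (Set.indicator (Y ⁻¹' {y}) (fun _ => (1 : ℝ))) μ :=
    fun y => (integrable_const (1 : ℝ)).indicator (hYset y)
  -- key step: the two conditional expectations agree a.e.
  have key : ∀ y : Fin m,
      μ[Set.indicator (Y ⁻¹' {y}) (fun _ => (1 : ℝ)) | MeasurableSpace.comap Z m𝒵] =ᵐ[μ]
      μ[Set.indicator (Y ⁻¹' {y}) (fun _ => (1 : ℝ)) |
        MeasurableSpace.comap (fun ω => b (Z ω)) mℬ] := by
    intro y
    refine (ae_eq_condExp_of_forall_setIntegral_eq hmZ (hfint y)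
      (fun A _ _ => integrable_condExp.integrableOn) (fun A hA hAfin => ?_)
      (StronglyMeasurable.aestronglyMeasurable (StronglyMeasurable.mono stronglyMeasurable_condExp hBZ))).symm
    obtain ⟨t, ht, rfl⟩ := hA
    have hAmeas : MeasurableSet[mΩ] (Z ⁻¹' t) := hZ ht
    -- conditional independence: product formula
    have hprod : (μ⟦Y ⁻¹' {y} ∩ Z ⁻¹' t | MeasurableSpace.comap (fun ω => b (Z ω)) mℬ⟧) =ᵐ[μ]
        fun ω => (μ⟦Y ⁻¹' {y} | MeasurableSpace.comap (fun ω => b (Z ω)) mℬ⟧) ω *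
          (μ⟦Z ⁻¹' t | MeasurableSpace.comap (fun ω => b (Z ω)) mℬ⟧) ω :=
      (condIndepFun_iff_condExp_inter_preimage_eq_mul hY hZ).mp hbal {y} t
        (measurableSet_singleton y) ht
    -- right-hand side
    have hRHS : ∫ x in Z ⁻¹' t, Set.indicator (Y ⁻¹' {y}) (fun _ => (1 : ℝ)) x ∂μ
        = ∫ x, (μ⟦Y ⁻¹' {y} | MeasurableSpace.comap (fun ω => b (Z ω)) mℬ⟧) x *
            (μ⟦Z ⁻¹' t | MeasurableSpace.comap (fun ω => b (Z ω)) mℬ⟧) x ∂μ := by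
      rw [← integral_indicator hAmeas]
      have h1 : (Z ⁻¹' t).indicator (Set.indicator (Y ⁻¹' {y}) (fun _ => (1 : ℝ)))
          = Set.indicator (Y ⁻¹' {y} ∩ Z ⁻¹' t) (fun _ => (1 : ℝ)) := by
        ext ω
        by_cases h1 : ω ∈ Y ⁻¹' {y} <;> by_cases h2 : ω ∈ Z ⁻¹' t <;>
          simp [Set.indicator, h1, h2]
      rw [h1, ← integral_condExp hmB
        (f := Set.indicator (Y ⁻¹' {y} ∩ Z ⁻¹' t) (fun _ => (1 : ℝ)))]
      exact integral_congr_ae hprod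
    -- left-hand side
    have h2 : (Z ⁻¹' t).indicator
          (μ[Set.indicator (Y ⁻¹' {y}) (fun _ => (1 : ℝ)) |
            MeasurableSpace.comap (fun ω => b (Z ω)) mℬ])
        = (μ[Set.indicator (Y ⁻¹' {y}) (fun _ => (1 : ℝ)) |
            MeasurableSpace.comap (fun ω => b (Z ω)) mℬ])
          * Set.indicator (Z ⁻¹' t) (fun _ => (1 : ℝ)) := by
      ext ω
      by_cases h : ω ∈ Z ⁻¹' t <;> simp [Set.indicator, h]
    have hmul : Integrable
        ((μ[Set.indicator (Y ⁻¹' {y}) (fun _ => (1 : ℝ)) |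
            MeasurableSpace.comap (fun ω => b (Z ω)) mℬ])
          * Set.indicator (Z ⁻¹' t) (fun _ => (1 : ℝ))) μ := by
      rw [← h2]
      exact integrable_condExp.indicator hAmeas
    have h3 := condExp_mul_of_stronglyMeasurable_left (μ := μ)
      (m := MeasurableSpace.comap (fun ω => b (Z ω)) mℬ)
      (f := μ[Set.indicator (Y ⁻¹' {y}) (fun _ => (1 : ℝ)) |
        MeasurableSpace.comap (fun ω => b (Z ω)) mℬ])
      (g := Set.indicator (Z ⁻¹' t) (fun _ => (1 : ℝ)))
      stronglyMeasurable_condExp hmul ((integrable_const (1 : ℝ)).indicator hAmeas)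
    have hLHS : ∫ x in Z ⁻¹' t,
          (μ[Set.indicator (Y ⁻¹' {y}) (fun _ => (1 : ℝ)) |
            MeasurableSpace.comap (fun ω => b (Z ω)) mℬ]) x ∂μ
        = ∫ x, (μ⟦Y ⁻¹' {y} | MeasurableSpace.comap (fun ω => b (Z ω)) mℬ⟧) x *
            (μ⟦Z ⁻¹' t | MeasurableSpace.comap (fun ω => b (Z ω)) mℬ⟧) x ∂μ := by
      rw [← integral_indicator hAmeas, h2, ← integral_condExp hmB]
      exact integral_congr_ae h3
    rw [hLHS, hRHS]
  -- factor each coordinate through b ∘ Z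
  have hfac : ∀ y : Fin m, ∃ g : ℬ → ℝ, Measurable g ∧
      (μ[Set.indicator (Y ⁻¹' {y}) (fun _ => (1 : ℝ)) |
        MeasurableSpace.comap (fun ω => b (Z ω)) mℬ]) = fun ω => g (b (Z ω)) :=
    fun y => doob_dynkin_real (φ := fun ω => b (Z ω)) (StronglyMeasurable.measurable stronglyMeasurable_condExp)
  choose g hgmeas hgeq using hfac
  refine ⟨fun x y => g y x, measurable_pi_lambda _ fun y => hgmeas y, ?_⟩
  have hall : ∀ᵐ ω ∂μ, ∀ y : Fin m,
      s ω y = (μ[Set.indicator (Y ⁻¹' {y}) (fun _ => (1 : ℝ)) |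
        MeasurableSpace.comap (fun ω => b (Z ω)) mℬ]) ω := by
    refine ae_all_iff.mpr fun y => ?_
    have h1 := hs y
    rw [hSA y] at h1
    exact h1.trans (key y)
  filter_upwards [hall] with ω hω
  funext y
  rw [hω y, hgeq y]
end

section
/- Let Y be a random variable taking values in the finite set {1,...,m} and Z a random variable taking values in a measurable space 𝒵 on a common probability space. Let s(Z) = (P(Y = y | Z))_{y=1}^m be the propensity score, viewed as a σ(Z)-measurable random variable with values in ℝ^m. Then Y and Z are conditionally independent given the σ-algebra generated by s(Z); that is, the propensity score is itself a balancing score. -/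
open MeasureTheory ProbabilityTheory

/-- **The propensity score is a balancing score.**
Let `s ω = (P(Y = y | σ(Z)))_{y=1,…,m}` be the propensity score, a `σ(Z)`-measurable
random vector with values in `ℝ^m`. Then `Y` and `Z` are conditionally independent given
the σ-algebra generated by `s`. -/
theorem propensity_score_is_balancing_score
    {Ω 𝒵 : Type*} [mΩ : MeasurableSpace Ω] [StandardBorelSpace Ω] [Nonempty Ω]
    {m𝒵 : MeasurableSpace 𝒵}
    (μ : Measure Ω) [IsProbabilityMeasure μ]
    {m : ℕ} (Y : Ω → Fin m) (Z : Ω → 𝒵)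
    (hY : Measurable Y) (hZ : Measurable Z)
    -- the propensity score `s(Z) = (P(Y = y | Z))_{y=1}^m`, a `σ(Z)`-measurable random vector
    (s : Ω → Fin m → ℝ)
    (hs_meas : Measurable[MeasurableSpace.comap Z m𝒵] s)
    (hs : ∀ y : Fin m,
      (fun ω => s ω y) =ᵐ[μ]
        μ[Set.indicator {ω | Y ω = y} (fun _ => (1 : ℝ)) | MeasurableSpace.comap Z m𝒵]) :
    -- conclusion: `Y ⫫ Z | σ(s)`
    CondIndepFun (MeasurableSpace.comap s (inferInstance : MeasurableSpace (Fin m → ℝ)))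
      (hs_meas.comap_le.trans hZ.comap_le) Y Z μ := by
  classical
  have h𝒢ℋ : MeasurableSpace.comap s (inferInstance : MeasurableSpace (Fin m → ℝ))
      ≤ MeasurableSpace.comap Z m𝒵 := hs_meas.comap_le
  have hℋΩ : MeasurableSpace.comap Z m𝒵 ≤ mΩ := hZ.comap_le
  have h𝒢Ω : MeasurableSpace.comap s (inferInstance : MeasurableSpace (Fin m → ℝ)) ≤ mΩ :=
    h𝒢ℋ.trans hℋΩ
  rw [condIndepFun_iff_condExp_inter_preimage_eq_mul hY hZ]
  intro A B _hA hB
  -- abbreviations for the two indicator functions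
  set indY : Ω → ℝ := Set.indicator (Y ⁻¹' A) (fun _ => (1 : ℝ)) with hindYdef
  set indZ : Ω → ℝ := Set.indicator (Z ⁻¹' B) (fun _ => (1 : ℝ)) with hindZdef
  -- the candidate version of `μ[indY | σ(Z)]`: a `σ(s)`-measurable function
  set φ : Ω → ℝ := fun ω => ∑ y ∈ Finset.univ.filter (· ∈ A), s ω y with hφdef
  have hs_self : Measurable[MeasurableSpace.comap s
      (inferInstance : MeasurableSpace (Fin m → ℝ))] s :=
    measurable_iff_comap_le.2 le_rfl
  have hφmeas : StronglyMeasurable[MeasurableSpace.comap s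
      (inferInstance : MeasurableSpace (Fin m → ℝ))] φ := by
    apply Measurable.stronglyMeasurable
    exact Finset.measurable_sum _ fun y _ => (measurable_pi_apply y).comp hs_self
  -- measurability of the indicator sets
  have hYA : MeasurableSet[mΩ] (Y ⁻¹' A) := hY (MeasurableSet.of_discrete (s := A))
  have hZB : MeasurableSet[mΩ] (Z ⁻¹' B) := hZ hB
  have hZBℋ : MeasurableSet[MeasurableSpace.comap Z m𝒵] (Z ⁻¹' B) := ⟨B, hB, rfl⟩
  have hintY : Integrable indY μ := (integrable_const (1 : ℝ)).indicator hYA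
  have hintZ : Integrable indZ μ := (integrable_const (1 : ℝ)).indicator hZB
  -- indicator of `Y ⁻¹' A` as a finite sum of indicators of singletons
  have hind : indY = ∑ y ∈ Finset.univ.filter (· ∈ A),
      Set.indicator {ω' | Y ω' = y} (fun _ => (1 : ℝ)) := by
    funext ω
    rw [hindYdef]
    simp only [Set.indicator_apply, Set.mem_setOf_eq, Set.mem_preimage, Finset.sum_apply]
    rw [Finset.sum_ite_eq (Finset.univ.filter (· ∈ A)) (Y ω) (fun _ => (1 : ℝ))]
    simp
  -- `μ[indY | σ(Z)] = φ` a.e.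
  have hcondY : μ[indY | MeasurableSpace.comap Z m𝒵] =ᵐ[μ] φ := by
    rw [hind]
    refine (condExp_finset_sum (fun y _ => ?_) _).trans ?_
    · exact (integrable_const (1 : ℝ)).indicator
        (hY (MeasurableSet.of_discrete (s := ({y} : Set (Fin m)))))
    · calc (∑ y ∈ Finset.univ.filter (· ∈ A),
              μ[Set.indicator {ω' | Y ω' = y} (fun _ => (1 : ℝ)) | MeasurableSpace.comap Z m𝒵])
          =ᵐ[μ] ∑ y ∈ Finset.univ.filter (· ∈ A), fun ω => s ω y :=
            eventuallyEq_sum fun y _ => (hs y).symm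
        _ = φ := by funext ω; simp [hφdef, Finset.sum_apply]
  have hφint : Integrable φ μ := integrable_condExp.congr hcondY
  -- `μ[indY | σ(s)] = φ` a.e.
  have hφ𝒢 : μ[indY | MeasurableSpace.comap s
      (inferInstance : MeasurableSpace (Fin m → ℝ))] =ᵐ[μ] φ := by
    calc μ[indY | MeasurableSpace.comap s (inferInstance : MeasurableSpace (Fin m → ℝ))]
        =ᵐ[μ] μ[μ[indY | MeasurableSpace.comap Z m𝒵] | MeasurableSpace.comap s
          (inferInstance : MeasurableSpace (Fin m → ℝ))] :=
          (condExp_condExp_of_le h𝒢ℋ hℋΩ).symm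
      _ =ᵐ[μ] μ[φ | MeasurableSpace.comap s
          (inferInstance : MeasurableSpace (Fin m → ℝ))] := condExp_congr_ae hcondY
      _ = φ := condExp_of_stronglyMeasurable h𝒢Ω hφmeas hφint
  -- strong measurability of `indZ` w.r.t. `σ(Z)`
  have hindZℋ : StronglyMeasurable[MeasurableSpace.comap Z m𝒵] indZ :=
    (stronglyMeasurable_const (β := ℝ) (b := 1)).indicator hZBℋ
  -- integrability of products
  have hbd : ∀ x, ‖indZ x‖ ≤ 1 := by
    intro x
    rw [hindZdef]
    by_cases h : x ∈ Z ⁻¹' B <;> simp [Set.indicator_apply, h]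
  have hint_ZY : Integrable (indZ * indY) μ :=
    hintY.bdd_mul ((hindZℋ.mono hℋΩ).aestronglyMeasurable) (Filter.Eventually.of_forall hbd)
  have hint_Zφ : Integrable (indZ * φ) μ :=
    hφint.bdd_mul ((hindZℋ.mono hℋΩ).aestronglyMeasurable) (Filter.Eventually.of_forall hbd)
  have hmulcomm : (φ * indZ) = (indZ * φ) := mul_comm _ _
  have hint_φZ : Integrable (φ * indZ) μ := by rw [hmulcomm]; exact hint_Zφ
  -- indicator of intersection as product
  have hprod : Set.indicator (Y ⁻¹' A ∩ Z ⁻¹' B) (fun _ => (1 : ℝ)) = indZ * indY := by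
    rw [Set.inter_comm]
    exact Set.inter_indicator_one
  -- the computation
  calc μ[Set.indicator (Y ⁻¹' A ∩ Z ⁻¹' B) (fun _ => (1 : ℝ)) | MeasurableSpace.comap s
          (inferInstance : MeasurableSpace (Fin m → ℝ))]
      = μ[indZ * indY | MeasurableSpace.comap s
          (inferInstance : MeasurableSpace (Fin m → ℝ))] := by rw [hprod]
    _ =ᵐ[μ] μ[μ[indZ * indY | MeasurableSpace.comap Z m𝒵] | MeasurableSpace.comap s
          (inferInstance : MeasurableSpace (Fin m → ℝ))] :=
          (condExp_condExp_of_le h𝒢ℋ hℋΩ).symm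
    _ =ᵐ[μ] μ[indZ * μ[indY | MeasurableSpace.comap Z m𝒵] | MeasurableSpace.comap s
          (inferInstance : MeasurableSpace (Fin m → ℝ))] :=
        condExp_congr_ae (condExp_mul_of_stronglyMeasurable_left hindZℋ hint_ZY hintY)
    _ =ᵐ[μ] μ[indZ * φ | MeasurableSpace.comap s
          (inferInstance : MeasurableSpace (Fin m → ℝ))] := by
        refine condExp_congr_ae ?_
        filter_upwards [hcondY] with ω hω
        simp only [Pi.mul_apply, hω]
    _ = μ[φ * indZ | MeasurableSpace.comap s
          (inferInstance : MeasurableSpace (Fin m → ℝ))] := by rw [hmulcomm]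
    _ =ᵐ[μ] φ * μ[indZ | MeasurableSpace.comap s
          (inferInstance : MeasurableSpace (Fin m → ℝ))] :=
        condExp_mul_of_stronglyMeasurable_left hφmeas hint_φZ hintZ
    _ =ᵐ[μ] fun ω => (μ[indY | MeasurableSpace.comap s
          (inferInstance : MeasurableSpace (Fin m → ℝ))]) ω *
        (μ[indZ | MeasurableSpace.comap s
          (inferInstance : MeasurableSpace (Fin m → ℝ))]) ω := by
        filter_upwards [hφ𝒢] with ω hω
        simp only [Pi.mul_apply, hω]
end

section
/- Let Y be a random variable taking values in the finite set {1,...,m}, Z a random variable taking values in a measurable space 𝒵, and b : 𝒵 → ℬ a measurable function. Then Y and Z are conditionally independent given the σ-algebra σ(b(Z)) if and only if for every y ∈ {1,...,m}, the conditional expectation E[1_{Y=y} | σ(Z)] equals E[1_{Y=y} | σ(b(Z))] almost surely. -/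
open MeasureTheory ProbabilityTheory

/-- `Y ⫫ Z | σ(b ∘ Z)` holds if and only if, for every label `y`, the conditional
probabilities `P(Y = y | σ(Z))` and `P(Y = y | σ(b ∘ Z))` coincide almost surely. -/
theorem condIndep_iff_condexp_eq
    {Ω 𝒵 ℬ : Type*} [mΩ : MeasurableSpace Ω] [StandardBorelSpace Ω] [Nonempty Ω]
    {m𝒵 : MeasurableSpace 𝒵} {mℬ : MeasurableSpace ℬ}
    (μ : Measure Ω) [IsProbabilityMeasure μ]
    {m : ℕ} (Y : Ω → Fin m) (Z : Ω → 𝒵) (b : 𝒵 → ℬ)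
    (hY : Measurable Y) (hZ : Measurable Z) (hb : Measurable b) :
    CondIndepFun (MeasurableSpace.comap (fun ω => b (Z ω)) mℬ)
        ((hb.comp hZ).comap_le) Y Z μ ↔
      ∀ y : Fin m,
        μ[Set.indicator {ω | Y ω = y} (fun _ => (1 : ℝ)) | MeasurableSpace.comap Z m𝒵]
          =ᵐ[μ]
        μ[Set.indicator {ω | Y ω = y} (fun _ => (1 : ℝ)) |
            MeasurableSpace.comap (fun ω => b (Z ω)) mℬ] := by
  classical
  have hBZ : MeasurableSpace.comap (fun ω => b (Z ω)) mℬ ≤ MeasurableSpace.comap Z m𝒵 := by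
    rintro s ⟨t, ht, rfl⟩
    exact ⟨b ⁻¹' t, hb ht, rfl⟩
  have hZle : MeasurableSpace.comap Z m𝒵 ≤ mΩ := hZ.comap_le
  have hBle : MeasurableSpace.comap (fun ω => b (Z ω)) mℬ ≤ mΩ := hBZ.trans hZle
  have hmeasY : ∀ s : Set (Fin m), MeasurableSet (Y ⁻¹' s) := fun s => hY .of_discrete
  have hIint : ∀ s : Set (Fin m),
      Integrable (Set.indicator (Y ⁻¹' s) fun _ => (1 : ℝ)) μ := fun s =>
    (integrable_const (1 : ℝ)).indicator (hmeasY s)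
  constructor
  · -- independence → condexp equality
    intro h y
    refine (ae_eq_condExp_of_forall_setIntegral_eq hZle (hIint {y})
      (fun s _ _ => integrable_condExp.integrableOn) ?_
      (stronglyMeasurable_condExp.mono hBZ).aestronglyMeasurable).symm
    rintro s ⟨t, ht, rfl⟩ -
    have hsm : MeasurableSet (Z ⁻¹' t) := hZ ht
    have hmul := (condIndepFun_iff_condExp_inter_preimage_eq_mul hY hZ).mp h
      {y} t MeasurableSet.of_discrete ht
    -- abbreviations
    set g : Ω → ℝ := μ[Set.indicator (Y ⁻¹' {y}) (fun _ => (1 : ℝ)) |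
        MeasurableSpace.comap (fun ω => b (Z ω)) mℬ] with hg
    have hrw : (Z ⁻¹' t).indicator g
        = g * Set.indicator (Z ⁻¹' t) (fun _ => (1 : ℝ)) := by
      ext ω
      by_cases hω : ω ∈ Z ⁻¹' t <;> simp [Set.indicator_apply, hω]
    have hint1 : Integrable (g * Set.indicator (Z ⁻¹' t) (fun _ => (1 : ℝ))) μ := by
      rw [← hrw]; exact integrable_condExp.indicator hsm
    have hint2 : Integrable (Set.indicator (Z ⁻¹' t) (fun _ => (1 : ℝ))) μ :=
      (integrable_const (1 : ℝ)).indicator hsm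
    calc ∫ x in Z ⁻¹' t, g x ∂μ
        = ∫ x, (Z ⁻¹' t).indicator g x ∂μ := (integral_indicator hsm).symm
      _ = ∫ x, (g * Set.indicator (Z ⁻¹' t) (fun _ => (1 : ℝ))) x ∂μ := by rw [hrw]
      _ = ∫ x, (μ[g * Set.indicator (Z ⁻¹' t) (fun _ => (1 : ℝ)) |
            MeasurableSpace.comap (fun ω => b (Z ω)) mℬ]) x ∂μ :=
          (integral_condExp hBle).symm
      _ = ∫ x, (μ[Set.indicator (Y ⁻¹' {y} ∩ Z ⁻¹' t) (fun _ => (1 : ℝ)) |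
            MeasurableSpace.comap (fun ω => b (Z ω)) mℬ]) x ∂μ :=
          integral_congr_ae ((condExp_mul_of_stronglyMeasurable_left stronglyMeasurable_condExp
            hint1 hint2).trans hmul.symm)
      _ = ∫ x, (Set.indicator (Y ⁻¹' {y} ∩ Z ⁻¹' t) (fun _ => (1 : ℝ))) x ∂μ :=
          integral_condExp hBle
      _ = ∫ x in Z ⁻¹' t, Set.indicator {ω | Y ω = y} (fun _ => (1 : ℝ)) x ∂μ := by
          rw [← integral_indicator hsm, Set.indicator_indicator, Set.inter_comm]
          rfl
  · intro h
    rw [condIndepFun_iff_condExp_inter_preimage_eq_mul hY hZ]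
    have hae : ∀ᵐ ω ∂μ, ∀ y : Fin m,
        (μ[Set.indicator {ω | Y ω = y} (fun _ => (1 : ℝ)) | MeasurableSpace.comap Z m𝒵]) ω
          = (μ[Set.indicator {ω | Y ω = y} (fun _ => (1 : ℝ)) |
              MeasurableSpace.comap (fun ω => b (Z ω)) mℬ]) ω :=
      ae_all_iff.2 h
    have hAll : ∀ s : Set (Fin m),
        μ[Set.indicator (Y ⁻¹' s) (fun _ => (1 : ℝ)) | MeasurableSpace.comap Z m𝒵]
          =ᵐ[μ] μ[Set.indicator (Y ⁻¹' s) (fun _ => (1 : ℝ)) |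
            MeasurableSpace.comap (fun ω => b (Z ω)) mℬ] := by
      intro s
      have hrep : Set.indicator (Y ⁻¹' s) (fun _ => (1 : ℝ))
          = ∑ y ∈ Finset.univ.filter (· ∈ s),
              Set.indicator {ω | Y ω = y} (fun _ => (1 : ℝ)) := by
        ext ω
        by_cases hω : Y ω ∈ s <;>
          simp [Set.indicator_apply, Finset.sum_ite_eq, hω]
      rw [hrep]
      have h1 := condExp_finset_sum (μ := μ) (m := MeasurableSpace.comap Z m𝒵)
        (s := Finset.univ.filter (· ∈ s))
        (f := fun y => Set.indicator {ω | Y ω = y} (fun _ => (1 : ℝ)))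
        (fun i _ => hIint {i})
      have h2 := condExp_finset_sum (μ := μ)
        (m := MeasurableSpace.comap (fun ω => b (Z ω)) mℬ)
        (s := Finset.univ.filter (· ∈ s))
        (f := fun y => Set.indicator {ω | Y ω = y} (fun _ => (1 : ℝ)))
        (fun i _ => hIint {i})
      refine h1.trans (Filter.EventuallyEq.trans ?_ h2.symm)
      filter_upwards [hae] with ω hω
      simp only [Finset.sum_apply]
      exact Finset.sum_congr rfl fun y _ => hω y
    intro s t hs ht
    have hsm : MeasurableSet (Z ⁻¹' t) := hZ ht
    have hprod : Set.indicator (Y ⁻¹' s ∩ Z ⁻¹' t) (fun _ => (1 : ℝ))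
        = Set.indicator (Z ⁻¹' t) (fun _ => (1 : ℝ))
          * Set.indicator (Y ⁻¹' s) (fun _ => (1 : ℝ)) := by
      ext ω
      by_cases h1 : ω ∈ Y ⁻¹' s <;> by_cases h2 : ω ∈ Z ⁻¹' t <;>
        simp [Set.indicator_apply, h1, h2]
    have hintBA : Integrable (Set.indicator (Z ⁻¹' t) (fun _ => (1 : ℝ))
        * Set.indicator (Y ⁻¹' s) (fun _ => (1 : ℝ))) μ := by
      rw [← hprod]; exact (integrable_const (1 : ℝ)).indicator ((hmeasY s).inter hsm)
    have hintB : Integrable (Set.indicator (Z ⁻¹' t) (fun _ => (1 : ℝ))) μ :=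
      (integrable_const (1 : ℝ)).indicator hsm
    have hfBsm : StronglyMeasurable[MeasurableSpace.comap Z m𝒵]
        (Set.indicator (Z ⁻¹' t) (fun _ => (1 : ℝ))) :=
      stronglyMeasurable_const.indicator ⟨t, ht, rfl⟩
    set gA : Ω → ℝ := μ[Set.indicator (Y ⁻¹' s) (fun _ => (1 : ℝ)) |
        MeasurableSpace.comap (fun ω => b (Z ω)) mℬ] with hgA
    have hmulrw : gA * Set.indicator (Z ⁻¹' t) (fun _ => (1 : ℝ))
        = (Z ⁻¹' t).indicator gA := by
      ext ω
      by_cases hω : ω ∈ Z ⁻¹' t <;> simp [Set.indicator_apply, hω]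
    have hint3 : Integrable (gA * Set.indicator (Z ⁻¹' t) (fun _ => (1 : ℝ))) μ := by
      rw [hmulrw]; exact integrable_condExp.indicator hsm
    have step2 : μ[Set.indicator (Z ⁻¹' t) (fun _ => (1 : ℝ))
          * Set.indicator (Y ⁻¹' s) (fun _ => (1 : ℝ)) | MeasurableSpace.comap Z m𝒵]
        =ᵐ[μ] Set.indicator (Z ⁻¹' t) (fun _ => (1 : ℝ)) * gA :=
      (condExp_mul_of_stronglyMeasurable_left hfBsm hintBA (hIint s)).trans
        (Filter.EventuallyEq.mul (Filter.EventuallyEq.refl _ _) (hAll s))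
    have step3 : μ[Set.indicator (Z ⁻¹' t) (fun _ => (1 : ℝ)) * gA |
          MeasurableSpace.comap (fun ω => b (Z ω)) mℬ]
        =ᵐ[μ] gA * μ[Set.indicator (Z ⁻¹' t) (fun _ => (1 : ℝ)) |
          MeasurableSpace.comap (fun ω => b (Z ω)) mℬ] := by
      rw [mul_comm]
      exact condExp_mul_of_stronglyMeasurable_left stronglyMeasurable_condExp hint3 hintB
    calc μ[Set.indicator (Y ⁻¹' s ∩ Z ⁻¹' t) (fun _ => (1 : ℝ)) |
          MeasurableSpace.comap (fun ω => b (Z ω)) mℬ]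
        = μ[Set.indicator (Z ⁻¹' t) (fun _ => (1 : ℝ))
            * Set.indicator (Y ⁻¹' s) (fun _ => (1 : ℝ)) |
            MeasurableSpace.comap (fun ω => b (Z ω)) mℬ] := by rw [hprod]
      _ =ᵐ[μ] μ[μ[Set.indicator (Z ⁻¹' t) (fun _ => (1 : ℝ))
            * Set.indicator (Y ⁻¹' s) (fun _ => (1 : ℝ)) | MeasurableSpace.comap Z m𝒵] |
            MeasurableSpace.comap (fun ω => b (Z ω)) mℬ] :=
          (condExp_condExp_of_le hBZ hZle).symm
      _ =ᵐ[μ] μ[Set.indicator (Z ⁻¹' t) (fun _ => (1 : ℝ)) * gA |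
            MeasurableSpace.comap (fun ω => b (Z ω)) mℬ] := condExp_congr_ae step2
      _ =ᵐ[μ] gA * μ[Set.indicator (Z ⁻¹' t) (fun _ => (1 : ℝ)) |
            MeasurableSpace.comap (fun ω => b (Z ω)) mℬ] := step3
end

section
/- Let m ≥ 2 and 1 ≤ a ≤ m−1 be integers, and let p(· | z) be a probability mass function on the label set {1,...,m} for a fixed covariate value z. Consider the following sampling scheme: draw an original label Y₀ from p(· | z); independently draw a labels uniformly at random without replacement from the m−1 labels different from Y₀; then output a label chosen uniformly at random from the resulting a+1 labels (the original together with the a alternatives). Then the output label distribution satisfies, for every y ∈ {1,...,m}: p̂(y | z) = (1/(a+1)) · ( a/(m−1) + ((m−a−1)/(m−1)) · p(y | z) ). -/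
open Finset

lemma count_mem_powersetCard {α : Type*} [DecidableEq α] (s : Finset α) (y : α)
    (hy : y ∈ s) (a : ℕ) (ha : 1 ≤ a) :
    ((powersetCard a s).filter (fun S => y ∈ S)).card
      = (s.card - 1).choose (a - 1) := by
  rw [← card_erase_of_mem hy, ← card_powersetCard]
  apply card_nbij' (fun S => S.erase y) (fun T => insert y T)
  · intro S hS
    simp only [mem_coe, mem_filter, mem_powersetCard] at hS
    obtain ⟨⟨hsub, hcard⟩, hyS⟩ := hS
    simp only [mem_coe, mem_powersetCard]
    constructor
    · exact (erase_subset_erase y hsub)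
    · rw [card_erase_of_mem hyS, hcard]
  · intro T hT
    simp only [mem_coe, mem_powersetCard] at hT
    obtain ⟨hsub, hcard⟩ := hT
    have hyT : y ∉ T := fun h => (notMem_erase y s) (hsub h)
    simp only [mem_coe, mem_filter, mem_powersetCard]
    refine ⟨⟨?_, ?_⟩, mem_insert_self _ _⟩
    · exact insert_subset hy (hsub.trans (erase_subset _ _))
    · rw [card_insert_of_notMem hyT, hcard]
      omega
  · intro S hS
    simp only [mem_coe, mem_filter] at hS
    exact insert_erase hS.2
  · intro T hT
    simp only [mem_coe, mem_powersetCard] at hT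
    exact erase_insert (fun h => (notMem_erase y s) (hT.1 h))

/-- **Semi-balanced distribution of balanced mini-batch sampling (Theorem 4).**
For a fixed covariate value `z`, draw an original label `y₀` from `p (· | z)`, then draw
`a` alternative labels uniformly at random without replacement from the `m - 1` labels
different from `y₀` (equivalently, a uniformly random `a`-element subset `S` of the labels
other than `y₀`), and output a uniformly random element of the `a + 1` labels
`insert y₀ S`.  The resulting label distribution is
`p̂(y|z) = (1/(a+1)) * (a/(m-1) + ((m-a-1)/(m-1)) * p(y|z))`. -/
theorem semi_balanced_sampling
    {𝒵 : Type*} (m a : ℕ) (hm : 2 ≤ m) (ha1 : 1 ≤ a) (ha2 : a ≤ m - 1)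
    -- the conditional label pmf `p (· | z)` for each covariate value `z`
    (p : 𝒵 → Fin m → ℝ) (hp_nonneg : ∀ z y, 0 ≤ p z y) (hp_sum : ∀ z, ∑ y, p z y = 1)
    -- the output label distribution of the sampling scheme
    (phat : 𝒵 → Fin m → ℝ)
    (hphat : ∀ z y, phat z y =
      ∑ y₀ : Fin m, p z y₀ *
        ∑ S ∈ Finset.powersetCard a (Finset.univ.erase y₀),
          ((Nat.choose (m - 1) a : ℝ))⁻¹ * (((insert y₀ S).card : ℝ))⁻¹ *
            (if y ∈ insert y₀ S then 1 else 0)) :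
    ∀ z y, phat z y =
      (1 / ((a : ℝ) + 1)) *
        ((a : ℝ) / ((m : ℝ) - 1) + (((m : ℝ) - (a : ℝ) - 1) / ((m : ℝ) - 1)) * p z y) := by
  intro z y
  have hCpos : 0 < Nat.choose (m - 1) a := Nat.choose_pos ha2
  have hC : ((Nat.choose (m - 1) a : ℝ)) ≠ 0 := by positivity
  have hm1 : ((m : ℝ) - 1) ≠ 0 := by
    have : (2 : ℝ) ≤ (m : ℝ) := by exact_mod_cast hm
    linarith
  have ha1' : ((a : ℝ) + 1) ≠ 0 := by positivity
  have hmcast : ((m - 1 : ℕ) : ℝ) = (m : ℝ) - 1 := by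
    have : 1 ≤ m := by omega
    push_cast [this]; ring
  -- the nat choose identity
  have hid : (m - 1) * Nat.choose (m - 2) (a - 1) = a * Nat.choose (m - 1) a := by
    have h := Nat.add_one_mul_choose_eq (m - 2) (a - 1)
    have h1 : m - 2 + 1 = m - 1 := by omega
    have h2 : a - 1 + 1 = a := by omega
    rw [h1, h2] at h
    rw [h, Nat.mul_comm]
  have hcard_erase : ∀ y₀ : Fin m, (Finset.univ.erase y₀).card = m - 1 := by
    intro y₀
    rw [card_erase_of_mem (mem_univ _), card_univ, Fintype.card_fin]
  have inner : ∀ y₀ : Fin m,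
      (∑ S ∈ Finset.powersetCard a (Finset.univ.erase y₀),
        ((Nat.choose (m - 1) a : ℝ))⁻¹ * (((insert y₀ S).card : ℝ))⁻¹ *
          (if y ∈ insert y₀ S then 1 else 0))
      = (if y₀ = y then ((a : ℝ) + 1)⁻¹
          else ((a : ℝ) / ((m : ℝ) - 1)) * ((a : ℝ) + 1)⁻¹) := by
    intro y₀
    have hterm : ∀ S ∈ Finset.powersetCard a (Finset.univ.erase y₀),
        ((Nat.choose (m - 1) a : ℝ))⁻¹ * (((insert y₀ S).card : ℝ))⁻¹ *
          (if y ∈ insert y₀ S then 1 else 0)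
        = ((Nat.choose (m - 1) a : ℝ))⁻¹ * ((a : ℝ) + 1)⁻¹ *
          (if y ∈ insert y₀ S then (1 : ℝ) else 0) := by
      intro S hS
      simp only [mem_powersetCard] at hS
      have hy₀ : y₀ ∉ S := fun h => notMem_erase y₀ _ (hS.1 h)
      rw [card_insert_of_notMem hy₀, hS.2]
      push_cast
      ring
    rw [Finset.sum_congr rfl hterm, ← Finset.mul_sum, Finset.sum_boole]
    by_cases hyy : y₀ = y
    · subst hyy
      have : (Finset.powersetCard a (Finset.univ.erase y₀)).filter
          (fun S => y₀ ∈ insert y₀ S) = Finset.powersetCard a (Finset.univ.erase y₀) := by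
        apply filter_true_of_mem
        intro S _
        exact mem_insert_self _ _
      rw [if_pos rfl, this, card_powersetCard, hcard_erase]
      field_simp
    · rw [if_neg hyy]
      have hne : y ≠ y₀ := fun h => hyy h.symm
      have hfe : (Finset.powersetCard a (Finset.univ.erase y₀)).filter
          (fun S => y ∈ insert y₀ S)
          = (Finset.powersetCard a (Finset.univ.erase y₀)).filter (fun S => y ∈ S) := by
        apply filter_congr
        intro S _
        simp [mem_insert, hne]
      rw [hfe, count_mem_powersetCard _ y (mem_erase.2 ⟨hne, mem_univ _⟩) a ha1,
        hcard_erase]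
      have h21 : m - 1 - 1 = m - 2 := by omega
      rw [h21]
      -- now prove C⁻¹ * (a+1)⁻¹ * choose(m-2,a-1) = (a/(m-1)) * (a+1)⁻¹
      have hidR : ((m : ℝ) - 1) * ((Nat.choose (m - 2) (a - 1) : ℝ))
          = (a : ℝ) * ((Nat.choose (m - 1) a : ℝ)) := by
        rw [← hmcast]
        exact_mod_cast hid
      field_simp
      nlinarith [hidR]
  rw [hphat]
  rw [Finset.sum_congr rfl (fun y₀ _ => by rw [inner y₀])]
  set A : ℝ := ((a : ℝ) + 1)⁻¹ with hA
  set B : ℝ := ((a : ℝ) / ((m : ℝ) - 1)) * ((a : ℝ) + 1)⁻¹ with hB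
  have hsplit : ∀ y₀ : Fin m,
      p z y₀ * (if y₀ = y then A else B)
      = p z y₀ * B + (if y₀ = y then p z y₀ * (A - B) else 0) := by
    intro y₀
    split <;> ring
  rw [Finset.sum_congr rfl (fun y₀ _ => hsplit y₀), Finset.sum_add_distrib,
    ← Finset.sum_mul, hp_sum, Finset.sum_ite_eq' Finset.univ y, if_pos (mem_univ y)]
  rw [hA, hB]
  field_simp
  ring
end

section
/- Let f, g, k be integrable functions on ℝ^d with k integrable, and suppose the Fourier transform (characteristic function) of k is nonzero outside a set of Lebesgue measure zero. If the convolutions satisfy f ⋆ k = g ⋆ k Lebesgue-almost everywhere on ℝ^d, then f = g Lebesgue-almost everywhere. -/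
open MeasureTheory FourierTransform Convolution
open scoped RealInnerProductSpace ContDiff

set_option maxHeartbeats 1000000

namespace DeconvolutionAux

variable {d : ℕ}

/-- The complex exponential kernel of the Fourier transform. -/
noncomputable def ec (w v : EuclideanSpace ℝ (Fin d)) : ℂ :=
  Complex.exp ((↑(-2 * Real.pi * ⟪v, w⟫) : ℂ) * Complex.I)

lemma ec_norm (w v : EuclideanSpace ℝ (Fin d)) : ‖ec w v‖ = 1 := by
  simp only [ec]
  exact Complex.norm_exp_ofReal_mul_I _

lemma ec_cont (w : EuclideanSpace ℝ (Fin d)) : Continuous (ec w) := by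
  apply Complex.continuous_exp.comp
  exact (Complex.continuous_ofReal.comp
    (continuous_const.mul ((continuous_id.inner continuous_const)))).mul continuous_const

lemma ec_add (w x t : EuclideanSpace ℝ (Fin d)) : ec w (x + t) = ec w x * ec w t := by
  simp only [ec]
  rw [← Complex.exp_add]
  congr 1
  rw [inner_add_left]
  push_cast
  ring

lemma fourier_eq_ec (h : EuclideanSpace ℝ (Fin d) → ℂ) (w : EuclideanSpace ℝ (Fin d)) :
    𝓕 h w = ∫ v, ec w v * h v := by
  rw [Real.fourier_eq']
  simp only [ec, smul_eq_mul]

/-- The Fourier transform of a convolution of integrable functions is the product of the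
Fourier transforms. -/
lemma fourier_conv (u k : EuclideanSpace ℝ (Fin d) → ℝ)
    (hu : Integrable u) (hk : Integrable k) (w : EuclideanSpace ℝ (Fin d)) :
    𝓕 (fun x => ((u ⋆[ContinuousLinearMap.mul ℝ ℝ] k) x : ℂ)) w
      = 𝓕 (fun x => (u x : ℂ)) w * 𝓕 (fun x => (k x : ℂ)) w := by
  have baseint : Integrable
      (fun p : EuclideanSpace ℝ (Fin d) × EuclideanSpace ℝ (Fin d) =>
        (u p.2 : ℂ) * (k (p.1 - p.2) : ℂ)) (volume.prod volume) :=
    hu.ofReal.convolution_integrand (ContinuousLinearMap.mul ℂ ℂ) hk.ofReal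
  have hQ : Integrable
      (fun p : EuclideanSpace ℝ (Fin d) × EuclideanSpace ℝ (Fin d) =>
        ec w p.1 * ((u p.2 : ℂ) * (k (p.1 - p.2) : ℂ))) (volume.prod volume) :=
    baseint.bdd_mul (((ec_cont w).comp continuous_fst).aestronglyMeasurable)
      (Filter.Eventually.of_forall fun p => le_of_eq (ec_norm w p.1))
  calc
    𝓕 (fun x => ((u ⋆[ContinuousLinearMap.mul ℝ ℝ] k) x : ℂ)) w
        = ∫ x, ec w x * (∫ t, (u t : ℂ) * (k (x - t) : ℂ)) := by
          rw [fourier_eq_ec]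
          congr 1 with x
          congr 1
          rw [convolution_def]
          simp only [ContinuousLinearMap.mul_apply']
          rw [show ((∫ t, u t * k (x - t) : ℝ) : ℂ) = ∫ t, ((u t * k (x - t) : ℝ) : ℂ) from
            (integral_ofReal).symm]
          congr 1 with t
          push_cast
          ring
    _ = ∫ x, ∫ t, ec w x * ((u t : ℂ) * (k (x - t) : ℂ)) := by
          congr 1 with x
          rw [← integral_const_mul]
    _ = ∫ t, ∫ x, ec w x * ((u t : ℂ) * (k (x - t) : ℂ)) := integral_integral_swap hQ
    _ = ∫ t, (u t : ℂ) * (ec w t * ∫ x, ec w x * (k x : ℂ)) := by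
          congr 1 with t
          rw [← integral_add_right_eq_self (fun x => ec w x * ((u t : ℂ) * (k (x - t) : ℂ))) t]
          simp only [add_sub_cancel_right, ec_add]
          rw [← integral_const_mul, ← integral_const_mul]
          congr 1 with x
          ring
    _ = (∫ t, ec w t * (u t : ℂ)) * (∫ x, ec w x * (k x : ℂ)) := by
          rw [← integral_mul_const]
          congr 1 with t
          ring
    _ = 𝓕 (fun x => (u x : ℂ)) w * 𝓕 (fun x => (k x : ℂ)) w := by
          rw [fourier_eq_ec, fourier_eq_ec]

/-- A smooth compactly supported function, complexified, is a Schwartz function. -/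
lemma exists_schwartz (g0 : EuclideanSpace ℝ (Fin d) → ℝ)
    (hg : ContDiff ℝ ∞ g0) (hsupp : HasCompactSupport g0) :
    ∃ φ : SchwartzMap (EuclideanSpace ℝ (Fin d)) ℂ, ∀ x, φ x = (g0 x : ℂ) := by
  set gC : EuclideanSpace ℝ (Fin d) → ℂ := fun x => (g0 x : ℂ) with hgC'
  have hgC : ContDiff ℝ ∞ gC := Complex.ofRealCLM.contDiff.comp hg
  have hsC : HasCompactSupport gC := by
    exact hsupp.comp_left (g := Complex.ofReal) Complex.ofReal_zero
  refine ⟨⟨gC, hgC, fun k n => ?_⟩, fun x => rfl⟩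
  have h1 : HasCompactSupport (iteratedFDeriv ℝ n gC) := hsC.iteratedFDeriv n
  have h2 : Continuous fun x : EuclideanSpace ℝ (Fin d) =>
      ‖x‖ ^ k * ‖iteratedFDeriv ℝ n gC x‖ :=
    ((continuous_norm.pow k).mul
      (hgC.continuous_iteratedFDeriv (by exact_mod_cast le_top)).norm)
  have h3 : HasCompactSupport fun x : EuclideanSpace ℝ (Fin d) =>
      ‖x‖ ^ k * ‖iteratedFDeriv ℝ n gC x‖ := (h1.norm).mul_left
  obtain ⟨C, hC⟩ := h3.exists_bound_of_continuous h2
  refine ⟨C, fun x => ?_⟩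
  have := hC x
  rwa [Real.norm_eq_abs, abs_of_nonneg (by positivity)] at this

end DeconvolutionAux

open DeconvolutionAux

/-- **Deconvolution.**
Let `f, g, k` be integrable functions on `ℝ^d` such that the Fourier transform
(characteristic function) of `k` vanishes only on a Lebesgue-null set.  If
`f ⋆ k = g ⋆ k` Lebesgue-almost everywhere, then `f = g` Lebesgue-almost everywhere. -/
theorem deconvolution_ae_eq
    {d : ℕ} (f g k : EuclideanSpace ℝ (Fin d) → ℝ)
    (hf : Integrable f) (hg : Integrable g) (hk : Integrable k)
    -- the zero set of the Fourier transform of `k` has Lebesgue measure zero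
    (hkhat : volume {w : EuclideanSpace ℝ (Fin d) |
      𝓕 (fun x => (k x : ℂ)) w = 0} = 0)
    -- the convolutions agree almost everywhere
    (hconv : (f ⋆[ContinuousLinearMap.mul ℝ ℝ] k) =ᵐ[volume]
             (g ⋆[ContinuousLinearMap.mul ℝ ℝ] k)) :
    f =ᵐ[volume] g := by
  classical
  -- Step 1: products of Fourier transforms agree pointwise
  have hprod : ∀ w : EuclideanSpace ℝ (Fin d),
      𝓕 (fun x => (f x : ℂ)) w * 𝓕 (fun x => (k x : ℂ)) w
        = 𝓕 (fun x => (g x : ℂ)) w * 𝓕 (fun x => (k x : ℂ)) w := by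
    intro w
    rw [← fourier_conv f k hf hk w, ← fourier_conv g k hg hk w,
      Real.fourier_eq, Real.fourier_eq]
    apply integral_congr_ae
    filter_upwards [hconv] with x hx
    rw [hx]
  -- Step 2: Fourier transforms of f and g agree a.e.
  have hae : ∀ᵐ w : EuclideanSpace ℝ (Fin d),
      𝓕 (fun x => (f x : ℂ)) w = 𝓕 (fun x => (g x : ℂ)) w := by
    have hsub : {w : EuclideanSpace ℝ (Fin d) |
        ¬ 𝓕 (fun x => (f x : ℂ)) w = 𝓕 (fun x => (g x : ℂ)) w}
        ⊆ {w : EuclideanSpace ℝ (Fin d) | 𝓕 (fun x => (k x : ℂ)) w = 0} := by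
      intro w hw
      by_contra h0
      exact hw (mul_right_cancel₀ h0 (hprod w))
    exact measure_mono_null hsub hkhat
  -- Step 3: the Fourier transform of F := fC - gC vanishes a.e.
  set F : EuclideanSpace ℝ (Fin d) → ℂ := fun x => (f x : ℂ) - (g x : ℂ) with hF
  have hFi : Integrable F := hf.ofReal.sub hg.ofReal
  have hFhat : ∀ᵐ w : EuclideanSpace ℝ (Fin d), 𝓕 F w = 0 := by
    filter_upwards [hae] with w hw
    have h1 : 𝓕 F w = 𝓕 (fun x => (f x : ℂ)) w - 𝓕 (fun x => (g x : ℂ)) w := by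
      rw [Real.fourier_eq, Real.fourier_eq, Real.fourier_eq]
      simp only [hF, smul_sub]
      exact integral_sub ((Real.fourierIntegral_convergent_iff w).2 hf.ofReal)
        ((Real.fourierIntegral_convergent_iff w).2 hg.ofReal)
    rw [h1, hw, sub_self]
  -- Step 4: F integrates to zero against every smooth compactly supported test function
  have key : ∀ (φ : EuclideanSpace ℝ (Fin d) → ℝ), ContDiff ℝ ∞ φ → HasCompactSupport φ →
      ∫ x, φ x • F x = 0 := by
    intro φ hφ hφs
    obtain ⟨ψ, hψ⟩ := exists_schwartz φ hφ hφs
    set χ := (FourierTransform.fourierCLE ℂ (SchwartzMap (EuclideanSpace ℝ (Fin d)) ℂ)).symm ψ with hχ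
    have hχf : 𝓕 ⇑χ = ⇑ψ := by
      rw [← SchwartzMap.fourier_coe, ← FourierTransform.fourierCLE_apply (R := ℂ), hχ,
        (FourierTransform.fourierCLE ℂ (SchwartzMap (EuclideanSpace ℝ (Fin d)) ℂ)).apply_symm_apply]
    have flip := VectorFourier.integral_fourierIntegral_smul_eq_flip
      (μ := (volume : Measure (EuclideanSpace ℝ (Fin d))))
      (ν := (volume : Measure (EuclideanSpace ℝ (Fin d))))
      (L := innerₗ (EuclideanSpace ℝ (Fin d)))
      Real.continuous_fourierChar continuous_inner hFi χ.integrable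
    have hLHS : ∫ ξ, (VectorFourier.fourierIntegral 𝐞 volume
        (innerₗ (EuclideanSpace ℝ (Fin d))) F ξ) • (χ ξ) = 0 := by
      rw [integral_congr_ae (g := fun _ => (0 : ℂ)) ?_, integral_zero]
      filter_upwards [hFhat] with ξ hξ
      have h2 : VectorFourier.fourierIntegral 𝐞 volume
          (innerₗ (EuclideanSpace ℝ (Fin d))) F ξ = 𝓕 F ξ := rfl
      rw [h2, hξ, zero_smul]
    rw [hLHS] at flip
    have hRHS : ∫ x, F x • (VectorFourier.fourierIntegral 𝐞 volume
        (innerₗ (EuclideanSpace ℝ (Fin d))).flip ⇑χ x) = ∫ x, F x • (ψ x) := by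
      congr 1 with x
      rw [flip_innerₗ]
      have h3 : VectorFourier.fourierIntegral 𝐞 volume
          (innerₗ (EuclideanSpace ℝ (Fin d))) ⇑χ x = 𝓕 ⇑χ x := rfl
      rw [h3, hχf]
    rw [hRHS] at flip
    have h4 : ∫ x, φ x • F x = ∫ x, F x • ψ x := by
      congr 1 with x
      rw [hψ x, smul_eq_mul, mul_comm, Complex.real_smul]
    rw [h4, ← flip]
  -- Step 5: conclude
  have hF0 : ∀ᵐ x ∂(volume : Measure (EuclideanSpace ℝ (Fin d))), F x = 0 :=
    ae_eq_zero_of_integral_contDiff_smul_eq_zero hFi.locallyIntegrable key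
  filter_upwards [hF0] with x hx
  have hx' : (f x : ℂ) = g x := by
    have h5 : (f x : ℂ) - (g x : ℂ) = 0 := hx
    rwa [sub_eq_zero] at h5
  exact_mod_cast hx'
end
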